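/- arXiv:1503.06887 — 5 statements merged into one kernel-verified Lean document; each statement's English description precedes it below -/
import Mathlib

section
/- For n ≥ 0 let M_n be the linear operator on real-valued functions on ZMod (2^n) defined by (M_n φ)(y) = (φ(1 − y) + φ(−y))/2. Then M_n has exactly 2^n distinct real eigenvalues, and its set of eigenvalues equals {1} ∪ {λ ∈ ℝ : ∃ i < n, f^[i](2λ) = 0}, where f : ℝ → ℝ is f(x) = x² − 2 and f^[i] denotes the i-fold iterate of f (f^[0] = id). -/
open Real

private lemma fIter_two_cos (i : ℕ) (t : ℝ) :
    (fun x : ℝ => x ^ 2 - 2)^[i] (2 * Real.cos t) = 2 * Real.cos (2 ^ i * t) := by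
  induction i generalizing t with
  | zero => simp
  | succ i ih =>
    rw [Function.iterate_succ_apply]
    have h1 : (2 * Real.cos t) ^ 2 - 2 = 2 * Real.cos (2 * t) := by
      simp only [Real.cos_two_mul]; ring
    show (fun x : ℝ => x ^ 2 - 2)^[i] ((2 * Real.cos t) ^ 2 - 2) = _
    rw [h1, ih]
    have h2 : (2:ℝ) ^ (i + 1) * t = 2 ^ i * (2 * t) := by ring
    rw [h2]

private lemma fIter_big (i : ℕ) (x : ℝ) (hx : 2 < |x|) :
    2 < |(fun x : ℝ => x ^ 2 - 2)^[i] x| := by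
  induction i generalizing x with
  | zero => simpa
  | succ i ih =>
    rw [Function.iterate_succ_apply]
    apply ih
    have h4 : 4 < x ^ 2 := by nlinarith [abs_nonneg x, sq_abs x]
    have h5 : (2:ℝ) < x ^ 2 - 2 := by linarith
    calc (2:ℝ) < x ^ 2 - 2 := h5
    _ ≤ |x ^ 2 - 2| := le_abs_self _
    -- need it to be |f x| for beta
  
private noncomputable def evec (n j : ℕ) (y : ZMod (2 ^ n)) : ℝ :=
  Real.cos (π * j / (2 ^ n * 2) * (4 * (y.val : ℝ) - 1))

private lemma evec_cong (n j : ℕ) [NeZero (2 ^ n)] (y : ZMod (2 ^ n)) (x : ℤ)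
    (hx : (x : ZMod (2 ^ n)) = y) :
    Real.cos (π * j / (2 ^ n * 2) * (4 * (x : ℝ) - 1)) = evec n j y := by
  have h1 : ((y.val : ℤ) : ZMod (2 ^ n)) = y := by
    push_cast
    simp [ZMod.natCast_val, ZMod.cast_id]
  have h2 : x ≡ (y.val : ℤ) [ZMOD (2 ^ n : ℕ)] := by
    rw [← ZMod.intCast_eq_intCast_iff]
    rw [hx, h1]
  obtain ⟨k, hk⟩ : ∃ k : ℤ, x = (y.val : ℤ) + 2 ^ n * k := by
    obtain ⟨k, hk⟩ := (Int.ModEq.dvd h2)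
    exact ⟨-k, by push_cast at hk ⊢; linarith⟩
  have hxr : (x : ℝ) = (y.val : ℝ) + 2 ^ n * (k : ℝ) := by exact_mod_cast congrArg (Int.cast : ℤ → ℝ) hk
  have harg : π * j / (2 ^ n * 2) * (4 * (x : ℝ) - 1)
      = π * j / (2 ^ n * 2) * (4 * (y.val : ℝ) - 1) + ((j * k : ℤ) : ℝ) * (2 * π) := by
    have h2n : (2:ℝ) ^ n ≠ 0 := by positivity
    rw [hxr]
    push_cast
    field_simp
    ring
  rw [harg, Real.cos_add_int_mul_two_pi]
  rfl

private lemma evec_eigen (n : ℕ) [NeZero (2 ^ n)]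
    (M : (ZMod (2 ^ n) → ℝ) →ₗ[ℝ] (ZMod (2 ^ n) → ℝ))
    (hM : ∀ (φ : ZMod (2 ^ n) → ℝ) (y : ZMod (2 ^ n)),
      M φ y = (φ (1 - y) + φ (-y)) / 2) (j : ℕ) :
    M (evec n j) = Real.cos (π * j / 2 ^ n) • evec n j := by
  funext y
  rw [hM]
  have hA : evec n j (1 - y) = Real.cos (π * j / (2 ^ n * 2) * (3 - 4 * (y.val : ℝ))) := by
    rw [← evec_cong n j (1 - y) (1 - (y.val : ℤ)) (by push_cast; simp [ZMod.natCast_val, ZMod.cast_id])]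
    congr 1
    push_cast
    ring
  have hB : evec n j (-y) = Real.cos (π * j / (2 ^ n * 2) * (-1 - 4 * (y.val : ℝ))) := by
    rw [← evec_cong n j (-y) (-(y.val : ℤ)) (by push_cast; simp [ZMod.natCast_val, ZMod.cast_id])]
    congr 1
    push_cast
    ring
  rw [hA, hB, Real.cos_add_cos]
  have h2n : (2:ℝ) ^ n ≠ 0 := by positivity
  have e1 : (π * j / (2 ^ n * 2) * (3 - 4 * (y.val : ℝ)) + π * j / (2 ^ n * 2) * (-1 - 4 * (y.val : ℝ))) / 2
      = -(π * j / (2 ^ n * 2) * (4 * (y.val : ℝ) - 1)) := by ring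
  have e2 : (π * j / (2 ^ n * 2) * (3 - 4 * (y.val : ℝ)) - π * j / (2 ^ n * 2) * (-1 - 4 * (y.val : ℝ))) / 2
      = π * j / 2 ^ n := by field_simp; ring
  rw [e1, e2, Real.cos_neg]
  show _ = Real.cos (π * j / 2 ^ n) * evec n j y
  unfold evec
  ring

private lemma evec_ne_zero (n j : ℕ) [NeZero (2 ^ n)] (hj : j < 2 ^ n) : evec n j ≠ 0 := by
  intro h
  have h0 : evec n j 0 = 0 := by rw [h]; rfl
  unfold evec at h0
  rw [ZMod.val_zero] at h0
  have hc : π * j / (2 ^ n * 2) * (4 * ((0:ℕ) : ℝ) - 1) = -(π * j / (2 ^ n * 2)) := by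
    push_cast; ring
  rw [hc, Real.cos_neg] at h0
  have hpos : 0 < Real.cos (π * j / (2 ^ n * 2)) := by
    apply Real.cos_pos_of_mem_Ioo
    constructor
    · have : (0:ℝ) ≤ π * j / (2 ^ n * 2) := by positivity
      linarith [Real.pi_pos]
    · have hjr : (j : ℝ) < 2 ^ n := by exact_mod_cast hj
      have h2n : (0:ℝ) < 2 ^ n := by positivity
      rw [div_lt_iff₀ (by positivity)]
      calc π * j < π * 2 ^ n := (mul_lt_mul_iff_right₀ Real.pi_pos).mpr hjr
        _ = π / 2 * (2 ^ n * 2) := by ring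
  linarith

/-- The random walk operator `M_n` of the Schreier graph of the action of the infinite
dihedral group on `ℤ/2ⁿℤ` (where the generators act by `y ↦ 1 − y` and `y ↦ −y`) has exactly
`2ⁿ` distinct real eigenvalues, and its set of eigenvalues equals
`{1} ∪ {λ | ∃ i < n, f^[i](2λ) = 0}` where `f(x) = x² − 2`. -/
theorem dihedral_level_spectrum (n : ℕ)
    (M : (ZMod (2 ^ n) → ℝ) →ₗ[ℝ] (ZMod (2 ^ n) → ℝ))
    (hM : ∀ (φ : ZMod (2 ^ n) → ℝ) (y : ZMod (2 ^ n)),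
      M φ y = (φ (1 - y) + φ (-y)) / 2) :
    {μ : ℝ | Module.End.HasEigenvalue M μ}.ncard = 2 ^ n ∧
    {μ : ℝ | Module.End.HasEigenvalue M μ} =
      {1} ∪ {μ : ℝ | ∃ i < n, (fun x : ℝ => x ^ 2 - 2)^[i] (2 * μ) = 0} := by
  haveI : NeZero (2 ^ n) := ⟨pow_ne_zero n two_ne_zero⟩
  have h2n : (0:ℝ) < 2 ^ n := by positivity
  set g : Fin (2 ^ n) → ℝ := fun j => Real.cos (π * (j : ℕ) / 2 ^ n) with hg
  -- injectivity of g
  have hmem : ∀ j : Fin (2 ^ n), π * (j : ℕ) / 2 ^ n ∈ Set.Icc 0 π := by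
    intro j
    constructor
    · positivity
    · rw [div_le_iff₀ h2n]
      have : ((j : ℕ) : ℝ) ≤ 2 ^ n := by
        exact_mod_cast (j.2.le)
      nlinarith [Real.pi_pos]
  have hginj : Function.Injective g := by
    intro a b hab
    have h := Real.injOn_cos (hmem a) (hmem b) hab
    field_simp at h
    exact Fin.ext (by exact_mod_cast h)
  -- eigenvectors
  have heigvec : ∀ j : Fin (2 ^ n), Module.End.HasEigenvector M (g j) (evec n (j : ℕ)) := by
    intro j
    exact ⟨Module.End.mem_eigenspace_iff.mpr (evec_eigen n M hM (j : ℕ)), evec_ne_zero n (j : ℕ) j.2⟩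
  have hsup : Set.range g ⊆ {μ : ℝ | Module.End.HasEigenvalue M μ} := by
    rintro μ ⟨j, rfl⟩
    exact Module.End.hasEigenvalue_of_hasEigenvector (heigvec j)
  have hsub : {μ : ℝ | Module.End.HasEigenvalue M μ} ⊆ Set.range g := by
    intro μ hμ
    by_contra hrange
    obtain ⟨w, hw⟩ := Module.End.HasEigenvalue.exists_hasEigenvector hμ
    have hli : LinearIndependent ℝ
        (fun o : Option (Fin (2 ^ n)) => o.elim w (fun j => evec n (j : ℕ))) := by
      apply Module.End.eigenvectors_linearIndependent' M
        (fun o : Option (Fin (2 ^ n)) => o.elim μ g)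
      · intro a b hab
        match a, b with
        | none, none => rfl
        | some a, some b => exact congrArg some (hginj hab)
        | none, some b => exact absurd hab.symm (fun h => hrange ⟨b, h⟩)
        | some a, none => exact absurd hab (fun h => hrange ⟨a, h⟩)
      · intro o
        match o with
        | none => exact hw
        | some j => exact heigvec j
    have hcard := hli.fintype_card_le_finrank
    rw [Module.finrank_pi ℝ] at hcard
    simp [ZMod.card] at hcard
  have hE : {μ : ℝ | Module.End.HasEigenvalue M μ} = Set.range g :=
    subset_antisymm hsub hsup
  rw [hE]
  constructor
  · rw [← Nat.card_coe_set_eq, Nat.card_range_of_injective hginj,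
      Nat.card_eq_fintype_card, Fintype.card_fin]
  · apply subset_antisymm
    · rintro μ ⟨j, rfl⟩
      rcases Nat.eq_zero_or_pos (j : ℕ) with h0 | hpos
      · left
        simp [hg, h0]
      · right
        obtain ⟨e, m, hm, hj⟩ := Nat.exists_eq_pow_mul_and_not_dvd hpos.ne' 2 (by norm_num)
        have hmpos : 0 < m := Nat.pos_of_ne_zero (fun h => hm (by simp [h]))
        have hen : e < n := by
          by_contra hc
          push_neg at hc
          have hle1 : 2 ^ e ≤ (j : ℕ) := by
            rw [hj]; exact Nat.le_mul_of_pos_right _ hmpos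
          have hle2 : 2 ^ n ≤ (j : ℕ) :=
            le_trans (Nat.pow_le_pow_right (by norm_num) hc) hle1
          have := j.2
          omega
        refine ⟨n - 1 - e, by omega, ?_⟩
        obtain ⟨m2, hm2⟩ : ∃ m2, m = 2 * m2 + 1 := ⟨m / 2, by omega⟩
        have hiter := fIter_two_cos (n - 1 - e) (π * (j : ℕ) / 2 ^ n)
        show (fun x : ℝ => x ^ 2 - 2)^[n - 1 - e] (2 * Real.cos (π * (j : ℕ) / 2 ^ n)) = 0
        rw [hiter]
        have harg : (2:ℝ) ^ (n - 1 - e) * (π * (j : ℕ) / 2 ^ n)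
            = (2 * ((m2 : ℤ) : ℝ) + 1) * π / 2 := by
          have hjr : ((j : ℕ) : ℝ) = 2 ^ e * m := by exact_mod_cast congrArg Nat.cast hj
          have h2r : (2:ℝ) ^ n = 2 ^ (n - 1 - e) * 2 ^ e * 2 := by
            have hx : (2:ℝ) ^ ((n - 1 - e) + e + 1) = 2 ^ (n - 1 - e) * 2 ^ e * 2 := by ring
            rw [← hx]
            congr 1
            omega
          have hmr : (m : ℝ) = 2 * (m2 : ℝ) + 1 := by exact_mod_cast congrArg Nat.cast hm2
          rw [hjr, h2r, hmr]
          have hne1 : (2:ℝ) ^ (n - 1 - e) ≠ 0 := by positivity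
          have hne2 : (2:ℝ) ^ e ≠ 0 := by positivity
          push_cast
          field_simp
        rw [harg, Real.cos_eq_zero_iff.mpr ⟨(m2 : ℤ), rfl⟩]
        ring
    · rintro μ (h1 | ⟨i, hi, hroot⟩)
      · have h2n1 : 0 < 2 ^ n := pow_pos (by norm_num) n
        refine ⟨⟨0, h2n1⟩, ?_⟩
        simp only [Set.mem_singleton_iff] at h1
        simp [hg, h1]
      · have habs : |2 * μ| ≤ 2 := by
          by_contra h
          have hbig := fIter_big i (2 * μ) (not_le.mp h)
          rw [hroot] at hbig
          norm_num at hbig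
        have hb := abs_le.mp habs
        have hm1 : -1 ≤ μ := by linarith [hb.1]
        have hm2 : μ ≤ 1 := by linarith [hb.2]
        set t := Real.arccos μ with ht
        have hct : Real.cos t = μ := Real.cos_arccos hm1 hm2
        have ht0 : 0 ≤ t := Real.arccos_nonneg μ
        have htpi : t ≤ π := Real.arccos_le_pi μ
        have hzero : Real.cos (2 ^ i * t) = 0 := by
          have := fIter_two_cos i t
          rw [hct, hroot] at this
          linarith
        obtain ⟨k, hk⟩ := Real.cos_eq_zero_iff.mp hzero
        have hk0 : 0 ≤ k := by
          by_contra hneg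
          push_neg at hneg
          have hk1 : k ≤ -1 := by omega
          have hkr : (k : ℝ) ≤ -1 := by exact_mod_cast hk1
          have h2i : (0:ℝ) < 2 ^ i := by positivity
          nlinarith [Real.pi_pos]
        have hkub : 2 * k + 1 < 2 ^ (i + 1) := by
          have h2i : (0:ℝ) < 2 ^ i := by positivity
          have hle' : (2 * (k:ℝ) + 1) * π / 2 ≤ 2 ^ i * π := by
            rw [← hk]; nlinarith
          have hle : (2 * (k:ℝ) + 1) ≤ 2 ^ (i + 1) := by
            apply le_of_mul_le_mul_right _ (show (0:ℝ) < π / 2 by positivity)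
            calc (2 * (k:ℝ) + 1) * (π / 2) = (2 * (k:ℝ) + 1) * π / 2 := by ring
              _ ≤ 2 ^ i * π := hle'
              _ = 2 ^ (i + 1) * (π / 2) := by ring
          have hle2 : (2 * k + 1 : ℤ) ≤ 2 ^ (i + 1) := by exact_mod_cast hle
          have hdvd : (2:ℤ) ∣ 2 ^ (i + 1) := dvd_pow_self 2 (Nat.succ_ne_zero i)
          omega
        set K := k.toNat with hK
        have hkK : (k : ℤ) = K := (Int.toNat_of_nonneg hk0).symm
        set j : ℕ := (2 * K + 1) * 2 ^ (n - 1 - i) with hj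
        have hjlt : j < 2 ^ n := by
          have hKub : 2 * K + 1 < 2 ^ (i + 1) := by
            have h := hkub
            rw [hkK] at h
            exact_mod_cast h
          calc j < 2 ^ (i + 1) * 2 ^ (n - 1 - i) :=
                Nat.mul_lt_mul_of_lt_of_le hKub le_rfl (pow_pos (by norm_num) _)
            _ = 2 ^ n := by rw [← pow_add]; congr 1; omega
        refine ⟨⟨j, hjlt⟩, ?_⟩
        show Real.cos (π * (j : ℕ) / 2 ^ n) = μ
        rw [← hct]
        congr 1
        have hjr : ((j : ℕ) : ℝ) = (2 * (k : ℝ) + 1) * 2 ^ (n - 1 - i) := by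
          rw [hj]
          push_cast [hkK]
          ring
        have h2r : (2:ℝ) ^ n = 2 ^ i * 2 ^ (n - 1 - i) * 2 := by
          have hx : (2:ℝ) ^ (i + (n - 1 - i) + 1) = 2 ^ i * 2 ^ (n - 1 - i) * 2 := by ring
          rw [← hx]
          congr 1
          omega
        rw [hjr, h2r]
        have hne1 : (2:ℝ) ^ i ≠ 0 := by positivity
        have hne2 : (2:ℝ) ^ (n - 1 - i) ≠ 0 := by positivity
        push_cast at hk
        field_simp
        linear_combination (-2) * hk
end

section
/- Let M be the bounded linear operator on the real Hilbert space ℓ²(ℤ) defined by (M f)(n) = (f(1 − n) + f(−n))/2. Then M is self-adjoint and its spectrum over ℝ equals the interval [−1, 1]. -/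
noncomputable section DihedralAux

local notation "E2" => lp (fun _ : ℤ => ℝ) 2

private lemma mul_summable' (f g : E2) : Summable fun n : ℤ => f n * g n := by
  have := lp.summable_inner (𝕜 := ℝ) f g
  simpa [RCLike.inner_apply, mul_comm] using this

private lemma inner_eq' (f g : E2) : (inner ℝ f g : ℝ) = ∑' n : ℤ, f n * g n := by
  rw [lp.inner_eq_tsum]; simp [RCLike.inner_apply, mul_comm]

private lemma norm_sq_eq' (f : E2) : ‖f‖^2 = ∑' n : ℤ, f n * f n := by
  rw [← real_inner_self_eq_norm_sq, inner_eq']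

private def e1' : ℤ ≃ ℤ := Function.Involutive.toPerm (fun n => 1 - n) (fun n => by ring)
private def e2' : ℤ ≃ ℤ := Function.Involutive.toPerm (fun n => -n) (fun n => by ring)

private lemma memA' (f : E2) : Memℓp (fun n : ℤ => f (1 - n)) 2 := by
  apply memℓp_gen
  have h2 := ((lp.memℓp f).summable (p := 2) (by norm_num)).comp_injective e1'.injective
  simpa [e1', Function.comp_def, Function.Involutive.toPerm] using h2

private lemma memB' (f : E2) : Memℓp (fun n : ℤ => f (-n)) 2 := by
  apply memℓp_gen
  have h2 := ((lp.memℓp f).summable (p := 2) (by norm_num)).comp_injective e2'.injective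
  simpa [e2', Function.comp_def, Function.Involutive.toPerm] using h2

private def fA' (f : E2) : E2 := ⟨fun n => f (1-n), memA' f⟩
private def fB' (f : E2) : E2 := ⟨fun n => f (-n), memB' f⟩

private lemma sumA' (f g : E2) : Summable fun n : ℤ => f (1 - n) * g n := mul_summable' (fA' f) g
private lemma sumB' (f g : E2) : Summable fun n : ℤ => f (-n) * g n := mul_summable' (fB' f) g
private lemma sumAA' (f : E2) : Summable fun n : ℤ => f (1 - n) * f (1 - n) :=
  mul_summable' (fA' f) (fA' f)
private lemma sumBB' (f : E2) : Summable fun n : ℤ => f (-n) * f (-n) :=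
  mul_summable' (fB' f) (fB' f)

private lemma swapA' (f g : E2) : ∑' n : ℤ, f (1 - n) * g n = ∑' n : ℤ, g (1 - n) * f n := by
  rw [← e1'.tsum_eq (fun n => f (1 - n) * g n)]
  apply tsum_congr; intro n
  simp only [e1', Function.Involutive.toPerm, Equiv.coe_fn_mk]
  rw [show (1 : ℤ) - (1 - n) = n by ring, mul_comm]

private lemma swapB' (f g : E2) : ∑' n : ℤ, f (-n) * g n = ∑' n : ℤ, g (-n) * f n := by
  rw [← e2'.tsum_eq (fun n => f (-n) * g n)]
  apply tsum_congr; intro n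
  simp only [e2', Function.Involutive.toPerm, Equiv.coe_fn_mk]
  rw [neg_neg, mul_comm]

section Op
variable (M : E2 →L[ℝ] E2)
    (hM : ∀ (f : E2) (n : ℤ), M f n = (f (1 - n) + f (-n)) / 2)

include hM in
private lemma inner_M' (f g : E2) :
    (inner ℝ (M f) g : ℝ) = ((∑' n : ℤ, f (1-n) * g n) + ∑' n : ℤ, f (-n) * g n) / 2 := by
  rw [inner_eq']
  rw [show (fun n : ℤ => (M f) n * g n)
      = fun n : ℤ => f (1-n) * g n / 2 + f (-n) * g n / 2 by
    funext n; rw [hM]; ring]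
  rw [Summable.tsum_add ((sumA' f g).div_const 2) ((sumB' f g).div_const 2),
    tsum_div_const, tsum_div_const]
  ring

include hM in
private lemma M_selfAdj' : IsSelfAdjoint M := by
  apply LinearMap.IsSymmetric.isSelfAdjoint
  intro f g
  show (inner ℝ (M f) g : ℝ) = inner ℝ f (M g)
  rw [real_inner_comm (M g) f, inner_M' M hM f g, inner_M' M hM g f, swapA', swapB']

include hM in
private lemma M_norm_le' : ‖M‖ ≤ 1 := by
  apply ContinuousLinearMap.opNorm_le_bound M zero_le_one
  intro f
  rw [one_mul]
  have h2 : ‖M f‖^2 ≤ ‖f‖^2 := by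
    rw [← real_inner_self_eq_norm_sq, ← real_inner_self_eq_norm_sq, inner_eq', inner_eq']
    have key : ∑' n : ℤ, (M f) n * (M f) n
        ≤ ∑' n : ℤ, (f (1-n) * f (1-n) / 2 + f (-n) * f (-n) / 2) := by
      apply Summable.tsum_le_tsum _ (mul_summable' (M f) (M f))
        (((sumAA' f).div_const 2).add ((sumBB' f).div_const 2))
      intro n
      rw [hM]
      nlinarith [sq_nonneg (f (1-n) - f (-n))]
    refine key.trans (le_of_eq ?_)
    rw [Summable.tsum_add ((sumAA' f).div_const 2) ((sumBB' f).div_const 2),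
      tsum_div_const, tsum_div_const]
    have hA : ∑' n : ℤ, f (1-n) * f (1-n) = ∑' n : ℤ, f n * f n := by
      have := e1'.tsum_eq (fun n : ℤ => f n * f n)
      simpa [e1', Function.Involutive.toPerm, Equiv.coe_fn_mk] using this
    have hB : ∑' n : ℤ, f (-n) * f (-n) = ∑' n : ℤ, f n * f n := by
      have := e2'.tsum_eq (fun n : ℤ => f n * f n)
      simpa [e2', Function.Involutive.toPerm, Equiv.coe_fn_mk] using this
    rw [hA, hB]; ring
  nlinarith [norm_nonneg (M f), norm_nonneg f]
end Op

private lemma eigen_id' (θ : ℝ) (n : ℤ) :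
    Real.cos ((2*(1-(n:ℝ)) - 1/2) * θ) + Real.cos ((2*(-(n:ℝ)) - 1/2) * θ)
      = 2 * Real.cos θ * Real.cos ((2*(n:ℝ) - 1/2) * θ) := by
  rw [Real.cos_add_cos]
  rw [show ((2*(1-(n:ℝ)) - 1/2) * θ + (2*(-(n:ℝ)) - 1/2) * θ)/2 = -((2*(n:ℝ) - 1/2) * θ) by ring]
  rw [show ((2*(1-(n:ℝ)) - 1/2) * θ - (2*(-(n:ℝ)) - 1/2) * θ)/2 = θ by ring]
  rw [Real.cos_neg]; ring

private lemma pair_bound' (θ lam : ℝ) (hθ : Real.cos θ = lam) (x : ℝ) :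
    1 - |2*lam^2 - 1| ≤ Real.cos x ^ 2 + Real.cos (x + 2*θ) ^ 2 := by
  have h1 : Real.cos x ^ 2 = 1/2 + Real.cos (2*x) / 2 := Real.cos_sq x
  have h2 : Real.cos (x + 2*θ) ^ 2 = 1/2 + Real.cos (2*(x + 2*θ)) / 2 := Real.cos_sq _
  have h3 : Real.cos (2*x) + Real.cos (2*(x+2*θ)) =
      2 * Real.cos (2*x + 2*θ) * Real.cos (2*θ) := by
    rw [Real.cos_add_cos, show (2*x + 2*(x+2*θ))/2 = 2*x+2*θ by ring,
      show (2*x - 2*(x+2*θ))/2 = -(2*θ) by ring, Real.cos_neg]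
  have h4 : Real.cos (2*θ) = 2*lam^2 - 1 := by rw [Real.cos_two_mul, hθ]
  have h5 : |Real.cos (2*x + 2*θ) * (2*lam^2-1)| ≤ |2*lam^2-1| := by
    rw [abs_mul]
    have := Real.abs_cos_le_one (2*x+2*θ)
    nlinarith [abs_nonneg (2*lam^2-1)]
  have h6 := neg_abs_le (Real.cos (2*x + 2*θ) * (2*lam^2-1))
  rw [h4] at h3
  linarith

private def hh' (θ : ℝ) (n : ℤ) : ℝ := Real.cos ((2*(n:ℝ) - 1/2) * θ)

private lemma sum_pairs' (θ lam : ℝ) (hθ : Real.cos θ = lam) (m : ℤ) (K : ℕ) :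
    (K : ℝ) * (1 - |2*lam^2 - 1|) ≤ ∑ j ∈ Finset.range (2*K), hh' θ (m + j) ^ 2 := by
  induction K with
  | zero => simp
  | succ K ih =>
    rw [show 2*(K+1) = (2*K) + 1 + 1 by ring, Finset.sum_range_succ, Finset.sum_range_succ]
    have hp : 1 - |2*lam^2 - 1| ≤ hh' θ (m + (2*K : ℕ)) ^ 2 + hh' θ (m + (2*K+1 : ℕ)) ^ 2 := by
      have := pair_bound' θ lam hθ ((2*((m:ℝ) + (2*K : ℕ)) - 1/2) * θ)
      unfold hh'
      convert this using 3
      · push_cast; ring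
      · push_cast; ring
    push_cast
    push_cast at hp ih ⊢
    linarith

private def Fk' (θ : ℝ) (k : ℕ) (n : ℤ) : ℝ :=
  if -(k:ℤ) ≤ n ∧ n ≤ k then Real.cos ((2*(n:ℝ) - 1/2) * θ) else 0

private lemma memF' (θ : ℝ) (k : ℕ) : Memℓp (Fk' θ k) 2 := by
  apply memℓp_gen
  apply summable_of_ne_finset_zero (s := Finset.Icc (-(k:ℤ)) k)
  intro n hn
  have : Fk' θ k n = 0 := by
    unfold Fk'
    rw [if_neg]
    intro ⟨h1, h2⟩
    exact hn (Finset.mem_Icc.2 ⟨h1, h2⟩)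
  rw [this]
  simp

set_option maxHeartbeats 1000000 in
private lemma mem_spec' (M : E2 →L[ℝ] E2)
    (hM : ∀ (f : E2) (n : ℤ), M f n = (f (1 - n) + f (-n)) / 2)
    (lam : ℝ) (hl1 : -1 < lam) (hl2 : lam < 1) (hl0 : lam ≠ 0) :
    lam ∈ spectrum ℝ M := by
  by_contra hns
  rw [spectrum.notMem_iff] at hns
  obtain ⟨u, hu⟩ := hns
  set T : E2 →L[ℝ] E2 := ↑u⁻¹ with hT
  set c : ℝ := 1 - |2*lam^2 - 1| with hc
  have hcpos : 0 < c := by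
    rw [hc]
    have habs : |2*lam^2-1| < 1 := by
      rw [abs_lt]
      constructor
      · nlinarith [mul_self_pos.2 hl0]
      · nlinarith [mul_pos (by linarith : (0:ℝ) < 1 - lam) (by linarith : (0:ℝ) < 1 + lam)]
    linarith
  set θ := Real.arccos lam with hθdef
  have hθ : Real.cos θ = lam := Real.cos_arccos (by linarith) (by linarith)
  obtain ⟨k, hk⟩ := exists_nat_gt (max 1 ((2*‖T‖)^2/c))
  have hk1R : (1:ℝ) < k := lt_of_le_of_lt (le_max_left _ _) hk
  have hk2R : (2*‖T‖)^2/c < k := lt_of_le_of_lt (le_max_right _ _) hk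
  have hk1 : 1 ≤ (k:ℤ) := by exact_mod_cast hk1R.le
  set f : E2 := ⟨Fk' θ k, memF' θ k⟩ with hf
  set g : E2 := (algebraMap ℝ (E2 →L[ℝ] E2) lam - M) f with hg
  have hfn : ∀ n : ℤ, f n = Fk' θ k n := fun n => rfl
  have hgn : ∀ n : ℤ, g n = lam * Fk' θ k n - (Fk' θ k (1-n) + Fk' θ k (-n))/2 := by
    intro n
    have h1 : g n = lam * f n - M f n := by
      rw [hg, Algebra.algebraMap_eq_smul_one, ContinuousLinearMap.sub_apply,
        ContinuousLinearMap.smul_apply, ContinuousLinearMap.one_apply]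
      simp [lp.coeFn_sub, lp.coeFn_smul]; rfl
    rw [h1, hM, hfn, hfn, hfn]
  -- g vanishes away from the two boundary points
  have hgzero : ∀ n : ℤ, n ∉ ({-(k:ℤ), (k:ℤ)+1} : Finset ℤ) → g n * g n = 0 := by
    intro n hn
    simp only [Finset.mem_insert, Finset.mem_singleton] at hn
    push_neg at hn
    obtain ⟨hn1, hn2⟩ := hn
    have : g n = 0 := by
      rw [hgn]
      unfold Fk'
      by_cases hin : -(k:ℤ) ≤ n ∧ n ≤ k
      · rw [if_pos hin, if_pos (by omega : -(k:ℤ) ≤ 1-n ∧ 1-n ≤ k),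
          if_pos (by omega : -(k:ℤ) ≤ -n ∧ -n ≤ k)]
        have heig := eigen_id' θ n
        rw [hθ] at heig
        push_cast
        push_cast at heig
        linear_combination (-(1:ℝ)/2) * heig
      · rw [if_neg hin, if_neg (by omega), if_neg (by omega)]
        ring
    rw [this, mul_zero]
  -- upper bound on ‖g‖
  have hgnorm : ‖g‖ ≤ 2 := by
    have hsq : ‖g‖^2 = g (-(k:ℤ)) * g (-(k:ℤ)) + g ((k:ℤ)+1) * g ((k:ℤ)+1) := by
      rw [norm_sq_eq', tsum_eq_sum hgzero, Finset.sum_pair (by omega : -(k:ℤ) ≠ (k:ℤ)+1)]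
    have hb1 : g (-(k:ℤ)) * g (-(k:ℤ)) ≤ 9/4 := by
      rw [hgn]
      unfold Fk'
      rw [if_pos (by omega), if_neg (by omega), if_pos (by omega)]
      have c1 := Real.neg_one_le_cos ((2*((-(k:ℤ)):ℝ) - 1/2) * θ)
      have c2 := Real.cos_le_one ((2*((-(k:ℤ)):ℝ) - 1/2) * θ)
      have c3 := Real.neg_one_le_cos ((2*(((k:ℤ)):ℝ) - 1/2) * θ)
      have c4 := Real.cos_le_one ((2*(((k:ℤ)):ℝ) - 1/2) * θ)
      push_cast at c1 c2 c3 c4 ⊢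
      simp only [neg_neg]
      have hXu : lam * Real.cos ((2 * -(k:ℝ) - 1 / 2) * θ) ≤ 1 := by nlinarith
      have hXl : -1 ≤ lam * Real.cos ((2 * -(k:ℝ) - 1 / 2) * θ) := by nlinarith
      have ht1 : lam * Real.cos ((2 * -(k:ℝ) - 1 / 2) * θ)
          - (0 + Real.cos ((2 * (k:ℝ) - 1 / 2) * θ)) / 2 ≤ 3/2 := by linarith
      have ht2 : -(3/2) ≤ lam * Real.cos ((2 * -(k:ℝ) - 1 / 2) * θ)
          - (0 + Real.cos ((2 * (k:ℝ) - 1 / 2) * θ)) / 2 := by linarith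
      nlinarith [ht1, ht2]
    have hb2 : g ((k:ℤ)+1) * g ((k:ℤ)+1) ≤ 1/4 := by
      rw [hgn]
      unfold Fk'
      rw [if_neg (by omega), if_pos (by omega), if_neg (by omega)]
      have c1 := Real.neg_one_le_cos ((2*((1 - ((k:ℤ)+1) : ℤ):ℝ) - 1/2) * θ)
      have c2 := Real.cos_le_one ((2*((1 - ((k:ℤ)+1) : ℤ):ℝ) - 1/2) * θ)
      push_cast at c1 c2 ⊢
      nlinarith [c1, c2]
    nlinarith [norm_nonneg g, hsq, hb1, hb2]
  -- lower bound on ‖f‖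
  have hfnorm : (k:ℝ) * c ≤ ‖f‖^2 := by
    rw [norm_sq_eq']
    set s : Finset ℤ :=
      (Finset.range (2*k)).map ⟨fun j : ℕ => -(k:ℤ) + j, fun a b hab => by
        have h' : -(k:ℤ) + a = -(k:ℤ) + b := hab
        omega⟩ with hs
    have hle := Summable.sum_le_tsum s (fun i _ => mul_self_nonneg (f i)) (mul_summable' f f)
    have heq : ∑ n ∈ s, f n * f n = ∑ j ∈ Finset.range (2*k), hh' θ (-(k:ℤ) + j) ^ 2 := by
      rw [hs, Finset.sum_map]
      simp only [Function.Embedding.coeFn_mk]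
      apply Finset.sum_congr rfl
      intro j hj
      have hjlt : j < 2*k := Finset.mem_range.mp hj
      have h2 : Fk' θ k (-(k:ℤ) + j) = hh' θ (-(k:ℤ) + j) := by
        unfold Fk' hh'
        rw [if_pos (by omega)]
      rw [← h2, sq]; rfl
    have := sum_pairs' θ lam hθ (-(k:ℤ)) k
    rw [← heq] at this
    rw [hc]
    linarith
  -- norm inequality from invertibility
  have hTle : ‖f‖ ≤ ‖T‖ * ‖g‖ := by
    have h1 : T (g) = f := by
      rw [hg, hT, ← hu, ← ContinuousLinearMap.mul_apply, u.inv_mul,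
        ContinuousLinearMap.one_apply]
    calc ‖f‖ = ‖T g‖ := by rw [h1]
      _ ≤ ‖T‖ * ‖g‖ := ContinuousLinearMap.le_opNorm _ _
  have hfup : ‖f‖^2 ≤ (2*‖T‖)^2 := by
    have h2 : ‖f‖ ≤ 2*‖T‖ := by
      calc ‖f‖ ≤ ‖T‖ * ‖g‖ := hTle
        _ ≤ ‖T‖ * 2 := by nlinarith [norm_nonneg T]
        _ = 2*‖T‖ := by ring
    nlinarith [norm_nonneg f]
  have hklc : (2*‖T‖)^2 < (k:ℝ) * c := by
    rw [div_lt_iff₀ hcpos] at hk2R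
    linarith
  linarith

private instance : Nontrivial (lp (fun _ : ℤ => ℝ) 2) := by
  refine nontrivial_of_ne (lp.single 2 (0:ℤ) (1:ℝ)) 0 ?_
  intro h
  have := congrArg (fun f : lp (fun _ : ℤ => ℝ) 2 => (f : ∀ _ : ℤ, ℝ) 0) h
  simp only [lp.single_apply_self] at this
  simp at this

end DihedralAux

set_option maxHeartbeats 1000000 in
/-- The random walk operator `M` on `ℓ²(ℤ)` of the Schreier graph of the action of the
infinite dihedral group on `ℤ` (generators acting by `n ↦ 1 − n` and `n ↦ −n`), given by
`(M f)(n) = (f(1 − n) + f(−n))/2`, is self-adjoint and its real spectrum is `[−1, 1]`. -/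
theorem dihedral_boundary_spectrum
    (M : lp (fun _ : ℤ => ℝ) 2 →L[ℝ] lp (fun _ : ℤ => ℝ) 2)
    (hM : ∀ (f : lp (fun _ : ℤ => ℝ) 2) (n : ℤ), M f n = (f (1 - n) + f (-n)) / 2) :
    IsSelfAdjoint M ∧ spectrum ℝ M = Set.Icc (-1 : ℝ) 1 := by
  refine ⟨M_selfAdj' M hM, ?_⟩
  apply Set.Subset.antisymm
  · intro x hx
    have h1 := spectrum.norm_le_norm_of_mem hx
    have h2 := M_norm_le' M hM
    rw [Real.norm_eq_abs] at h1
    have : |x| ≤ 1 := h1.trans h2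
    rw [abs_le] at this
    exact Set.mem_Icc.2 this
  · have hsub1 : Set.Ioo (0:ℝ) 1 ⊆ spectrum ℝ M := fun x hx =>
      mem_spec' M hM x (by linarith [hx.1]) hx.2 (ne_of_gt hx.1)
    have hsub2 : Set.Ioo (-1:ℝ) 0 ⊆ spectrum ℝ M := fun x hx =>
      mem_spec' M hM x hx.1 (by linarith [hx.2]) (ne_of_lt hx.2)
    have hcl : IsClosed (spectrum ℝ M) := spectrum.isClosed M
    intro x hx
    rw [Set.mem_Icc] at hx
    rcases le_or_gt x 0 with h | h
    · have hxc : x ∈ closure (Set.Ioo (-1:ℝ) 0) := by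
        rw [closure_Ioo (by norm_num : (-1:ℝ) ≠ 0)]
        exact Set.mem_Icc.2 ⟨hx.1, h⟩
      exact hcl.closure_subset_iff.2 hsub2 hxc
    · have hxc : x ∈ closure (Set.Ioo (0:ℝ) 1) := by
        rw [closure_Ioo (by norm_num : (0:ℝ) ≠ 1)]
        exact Set.mem_Icc.2 ⟨h.le, hx.2⟩
      exact hcl.closure_subset_iff.2 hsub1 hxc
end

section
/- Let f : ℝ → ℝ be the polynomial map f(x) = x² − 2. Then the closure of the set {x ∈ ℝ : ∃ n ∈ ℕ, f^[n](x) = 0} (the union of all backward iterates of 0 under f) equals the interval [−2, 2]. -/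
open Real

private lemma iter_cos (n : ℕ) (θ : ℝ) :
    (fun t : ℝ => t ^ 2 - 2)^[n] (2 * Real.cos θ) = 2 * Real.cos (2 ^ n * θ) := by
  induction n with
  | zero => simp
  | succ n ih =>
    rw [Function.iterate_succ_apply', ih]
    have h : (2 : ℝ) ^ (n + 1) * θ = 2 * (2 ^ n * θ) := by ring
    rw [h, Real.cos_two_mul]
    ring

private lemma iter_big (x : ℝ) (hx : 4 < x ^ 2) (n : ℕ) :
    4 < ((fun t : ℝ => t ^ 2 - 2)^[n] x) ^ 2 := by
  induction n with
  | zero => simpa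
  | succ n ih =>
    rw [Function.iterate_succ_apply']
    set y := (fun t : ℝ => t ^ 2 - 2)^[n] x
    have hy : 2 < y ^ 2 - 2 := by linarith
    nlinarith

private lemma cos_lip (a b : ℝ) : |Real.cos a - Real.cos b| ≤ |a - b| := by
  rw [Real.cos_sub_cos, abs_mul, abs_mul]
  have h1 : |(-2 : ℝ)| = 2 := by norm_num
  have h2 : |Real.sin ((a + b) / 2)| ≤ 1 :=
    abs_le.2 ⟨Real.neg_one_le_sin _, Real.sin_le_one _⟩
  have h3 : |Real.sin ((a - b) / 2)| ≤ |(a - b) / 2| := Real.abs_sin_le_abs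
  have h4 : |(a - b) / 2| = |a - b| / 2 := by rw [abs_div]; norm_num
  rw [h1]
  nlinarith [abs_nonneg (Real.sin ((a - b) / 2)), abs_nonneg (a - b),
    abs_nonneg (Real.sin ((a + b) / 2))]

/-- The closure of the union of all backward iterates of `0` under `f(x) = x² − 2`
equals the interval `[−2, 2]`. -/
theorem closure_backward_orbit_eq_Icc :
    closure {x : ℝ | ∃ n : ℕ, (fun t : ℝ => t ^ 2 - 2)^[n] x = 0} = Set.Icc (-2 : ℝ) 2 := by
  apply le_antisymm
  · have hsub : {x : ℝ | ∃ n : ℕ, (fun t : ℝ => t ^ 2 - 2)^[n] x = 0} ⊆ Set.Icc (-2 : ℝ) 2 := by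
      intro x ⟨n, hn⟩
      by_contra hx
      have h4 : 4 < x ^ 2 := by
        simp only [Set.mem_Icc, not_and_or, not_le] at hx
        rcases hx with h | h <;> nlinarith
      have := iter_big x h4 n
      rw [hn] at this
      norm_num at this
    exact closure_minimal hsub isClosed_Icc
  · intro y hy
    rw [Metric.mem_closure_iff]
    intro ε hε
    obtain ⟨hy1, hy2⟩ := hy
    set θ := Real.arccos (y / 2) with hθdef
    have hcos : 2 * Real.cos θ = y := by
      rw [hθdef, Real.cos_arccos (by linarith) (by linarith)]; ring
    obtain ⟨n, hn⟩ := pow_unbounded_of_one_lt (π / (ε / 4)) (by norm_num : (1:ℝ) < 2)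
    have hpow : (0:ℝ) < 2 ^ n := by positivity
    have hε4 : (0:ℝ) < ε / 4 := by linarith
    have hstep : π / 2 ^ (n + 1) < ε / 4 := by
      rw [div_lt_iff₀ (by positivity)]
      rw [div_lt_iff₀ hε4] at hn
      have h2 : (2:ℝ) ^ (n + 1) = 2 * 2 ^ n := by ring
      nlinarith
    set s := π / 2 ^ (n + 1) with hs
    have hspos : 0 < s := by positivity
    set k := ⌊θ / (2 * s)⌋ with hk
    set θ' := (2 * (k : ℝ) + 1) * s with hθ'
    have hfl : (k : ℝ) ≤ θ / (2 * s) := Int.floor_le _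
    have hfl2 : θ / (2 * s) < k + 1 := Int.lt_floor_add_one _
    have h2spos : (0:ℝ) < 2 * s := by linarith
    have h1 : (k : ℝ) * (2 * s) ≤ θ := (le_div_iff₀ h2spos).mp hfl
    have h2 : θ < ((k : ℝ) + 1) * (2 * s) := (div_lt_iff₀ h2spos).mp hfl2
    have hdist : |θ' - θ| ≤ s := by
      rw [abs_le, hθ']
      constructor <;> nlinarith
    refine ⟨2 * Real.cos θ', ⟨n, ?_⟩, ?_⟩
    · rw [iter_cos]
      have he : (2 : ℝ) ^ n * θ' = (2 * (k : ℝ) + 1) * π / 2 := by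
        rw [hθ', hs]; field_simp; ring
      rw [he, show Real.cos ((2 * (k:ℝ) + 1) * π / 2) = 0 from
        Real.cos_eq_zero_iff.mpr ⟨k, rfl⟩]
      ring
    · rw [Real.dist_eq, ← hcos]
      have he : 2 * Real.cos θ - 2 * Real.cos θ' = 2 * (Real.cos θ - Real.cos θ') := by ring
      rw [he, abs_mul, abs_two]
      have hle : |Real.cos θ - Real.cos θ'| ≤ |θ - θ'| := cos_lip θ θ'
      have h' : |θ - θ'| ≤ s := by rwa [abs_sub_comm]
      have : s < ε / 4 := hstep
      nlinarith [abs_nonneg (Real.cos θ - Real.cos θ')]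
end

section
/- With the 2^n × 2^n matrices a_n, b_n, c_n, d_n of the first Grigorchuk group, define for real x, y the matrix D_n(x,y) = a_n + b_n + c_n + d_n − (1+x)·I + (y−1)·a_n. Then for every n ≥ 2 and all real x, y with x² ≠ 4: det D_n(x,y) = (x² − 4)^(2^(n−2)) · det D_{n−1}(F(x,y)), where F : ℝ² → ℝ² is F(x,y) = (x − x y²/(x² − 4), 2y²/(x² − 4)). -/
open Matrix

/-- `Fin (2^n) ⊕ Fin (2^n) ≃ Fin (2^(n+1))`, used to assemble block matrices. -/
def finEquiv2 (n : ℕ) : Fin (2 ^ n) ⊕ Fin (2 ^ n) ≃ Fin (2 ^ (n + 1)) :=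
  finSumFinEquiv.trans (finCongr (by ring))

/-- The matrices `(a_n, b_n, c_n, d_n)` by which the four generators of the first Grigorchuk
group act on level `n` of the binary rooted tree. -/
noncomputable def grigGen : (n : ℕ) →
    Matrix (Fin (2 ^ n)) (Fin (2 ^ n)) ℝ × Matrix (Fin (2 ^ n)) (Fin (2 ^ n)) ℝ ×
      Matrix (Fin (2 ^ n)) (Fin (2 ^ n)) ℝ × Matrix (Fin (2 ^ n)) (Fin (2 ^ n)) ℝ
  | 0 => (1, 1, 1, 1)
  | n + 1 =>
    let p := grigGen n
    (Matrix.reindex (finEquiv2 n) (finEquiv2 n) (Matrix.fromBlocks 0 1 1 0),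
     Matrix.reindex (finEquiv2 n) (finEquiv2 n) (Matrix.fromBlocks p.1 0 0 p.2.2.1),
     Matrix.reindex (finEquiv2 n) (finEquiv2 n) (Matrix.fromBlocks p.1 0 0 p.2.2.2),
     Matrix.reindex (finEquiv2 n) (finEquiv2 n) (Matrix.fromBlocks 1 0 0 p.2.1))

/-- The auxiliary two-parameter pencil
`D_n(x,y) = a_n + b_n + c_n + d_n − (1+x)·I + (y−1)·a_n`. -/
noncomputable def grigPencil (n : ℕ) (x y : ℝ) : Matrix (Fin (2 ^ n)) (Fin (2 ^ n)) ℝ :=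
  (grigGen n).1 + (grigGen n).2.1 + (grigGen n).2.2.1 + (grigGen n).2.2.2 -
    (1 + x) • (1 : Matrix (Fin (2 ^ n)) (Fin (2 ^ n)) ℝ) + (y - 1) • (grigGen n).1

lemma grigGen_succ (n : ℕ) :
    grigGen (n + 1) =
      (Matrix.reindexAlgEquiv ℝ ℝ (finEquiv2 n) (Matrix.fromBlocks 0 1 1 0),
       Matrix.reindexAlgEquiv ℝ ℝ (finEquiv2 n)
         (Matrix.fromBlocks (grigGen n).1 0 0 (grigGen n).2.2.1),
       Matrix.reindexAlgEquiv ℝ ℝ (finEquiv2 n)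
         (Matrix.fromBlocks (grigGen n).1 0 0 (grigGen n).2.2.2),
       Matrix.reindexAlgEquiv ℝ ℝ (finEquiv2 n)
         (Matrix.fromBlocks 1 0 0 (grigGen n).2.1)) := rfl

lemma grig_a_sq (n : ℕ) : (grigGen n).1 * (grigGen n).1 = 1 := by
  cases n with
  | zero => simp [grigGen]
  | succ k =>
    have h : (grigGen (k + 1)).1 =
        Matrix.reindexAlgEquiv ℝ ℝ (finEquiv2 k) (Matrix.fromBlocks 0 1 1 0) := rfl
    rw [h, ← _root_.map_mul, Matrix.fromBlocks_multiply]
    simp only [Matrix.zero_mul, Matrix.mul_zero, Matrix.one_mul, Matrix.mul_one,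
      add_zero, zero_add]
    rw [Matrix.fromBlocks_one, _root_.map_one]

lemma det_swap_block (k : ℕ) (x : ℝ) :
    (Matrix.fromBlocks ((-x) • 1) ((2 : ℝ) • 1) ((2 : ℝ) • 1) ((-x) • 1) :
      Matrix (Fin (2 ^ k) ⊕ Fin (2 ^ k)) (Fin (2 ^ k) ⊕ Fin (2 ^ k)) ℝ).det =
      (x ^ 2 - 4) ^ 2 ^ k := by
  set M : Matrix (Fin (2 ^ k) ⊕ Fin (2 ^ k)) (Fin (2 ^ k) ⊕ Fin (2 ^ k)) ℝ :=
    Matrix.fromBlocks ((-x) • 1) ((2 : ℝ) • 1) ((2 : ℝ) • 1) ((-x) • 1) with hM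
  set P : Matrix (Fin (2 ^ k) ⊕ Fin (2 ^ k)) (Fin (2 ^ k) ⊕ Fin (2 ^ k)) ℝ :=
    Matrix.fromBlocks 1 1 1 (-1) with hP
  have hPP : P * P = (2 : ℝ) • 1 := by
    rw [hP, Matrix.fromBlocks_multiply, ← Matrix.fromBlocks_one, Matrix.fromBlocks_smul,
      Matrix.fromBlocks_inj]
    refine ⟨?_, ?_, ?_, ?_⟩ <;>
      simp only [Matrix.one_mul, Matrix.mul_one, Matrix.mul_neg, Matrix.neg_mul, neg_neg] <;>
      module
  have hPMP : P * M * P =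
      Matrix.fromBlocks ((2 * (2 - x)) • 1) 0 0 ((-2 * (2 + x)) • 1) := by
    rw [hP, hM, Matrix.fromBlocks_multiply, Matrix.fromBlocks_multiply, Matrix.fromBlocks_inj]
    refine ⟨?_, ?_, ?_, ?_⟩ <;>
      simp only [Matrix.one_mul, Matrix.mul_one, Matrix.mul_neg, Matrix.neg_mul,
        Matrix.smul_mul, Matrix.mul_smul, smul_neg, neg_neg, neg_smul] <;>
      module
  have hdetP : P.det * P.det = (2 : ℝ) ^ (2 ^ k + 2 ^ k) := by
    rw [← Matrix.det_mul, hPP, Matrix.det_smul, Matrix.det_one, mul_one]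
    simp
  have hdetPMP : P.det * M.det * P.det =
      (2 * (2 - x)) ^ 2 ^ k * (-2 * (2 + x)) ^ 2 ^ k := by
    rw [← Matrix.det_mul, ← Matrix.det_mul, hPMP, Matrix.det_fromBlocks_zero₂₁,
      Matrix.det_smul, Matrix.det_smul]
    simp
  have hkey : (2 : ℝ) ^ (2 ^ k + 2 ^ k) * M.det =
      (2 : ℝ) ^ (2 ^ k + 2 ^ k) * (x ^ 2 - 4) ^ 2 ^ k := by
    have h1 : P.det * M.det * P.det = P.det * P.det * M.det := by ring
    rw [h1, hdetP] at hdetPMP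
    rw [hdetPMP, ← mul_pow,
      show (2 : ℝ) ^ (2 ^ k + 2 ^ k) = 4 ^ 2 ^ k by rw [← two_mul, pow_mul]; norm_num,
      ← mul_pow]
    congr 1
    ring
  have h2 : ((2 : ℝ) ^ (2 ^ k + 2 ^ k)) ≠ 0 := by positivity
  exact mul_left_cancel₀ h2 hkey

/-- For `n ≥ 2` and `x² ≠ 4`:
`det D_n(x,y) = (x² − 4)^(2^(n−2)) · det D_{n−1}(F(x,y))` where
`F(x,y) = (x − xy²/(x² − 4), 2y²/(x² − 4))`. -/
theorem grigorchuk_det_recursion (n : ℕ) (hn : 2 ≤ n) (x y : ℝ) (hx : x ^ 2 ≠ 4) :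
    (grigPencil n x y).det =
      (x ^ 2 - 4) ^ 2 ^ (n - 2) *
        (grigPencil (n - 1) (x - x * y ^ 2 / (x ^ 2 - 4)) (2 * y ^ 2 / (x ^ 2 - 4))).det := by
  obtain ⟨k, rfl⟩ : ∃ k, n = k + 2 := ⟨n - 2, by omega⟩
  have hsub1 : k + 2 - 1 = k + 1 := rfl
  have hsub2 : k + 2 - 2 = k := rfl
  rw [hsub1, hsub2]
  have h4 : (4 : ℝ) - x ^ 2 ≠ 0 := fun h => hx (by linarith)
  have h4' : x ^ 2 - (4 : ℝ) ≠ 0 := fun h => hx (by linarith)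
  set a := (grigGen (k + 1)).1 with ha
  set b := (grigGen (k + 1)).2.1 with hb
  set c := (grigGen (k + 1)).2.2.1 with hc
  set d := (grigGen (k + 1)).2.2.2 with hd
  have haa : a * a = 1 := grig_a_sq (k + 1)
  set A : Matrix (Fin (2 ^ (k + 1))) (Fin (2 ^ (k + 1))) ℝ := a + a - x • 1 with hA
  set D : Matrix (Fin (2 ^ (k + 1))) (Fin (2 ^ (k + 1))) ℝ :=
    b + c + d - (1 + x) • 1 with hD
  -- Step 1: the pencil at level k+2 as a block matrix
  have hpencil : grigPencil (k + 2) x y =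
      Matrix.reindexAlgEquiv ℝ ℝ (finEquiv2 (k + 1))
        (Matrix.fromBlocks A (y • 1) (y • 1) D) := by
    rw [grigPencil, grigGen_succ (k + 1)]
    rw [show (1 : Matrix (Fin (2 ^ (k + 2))) (Fin (2 ^ (k + 2))) ℝ) =
      Matrix.reindexAlgEquiv ℝ ℝ (finEquiv2 (k + 1)) 1 from (_root_.map_one _).symm]
    rw [← _root_.map_add, ← _root_.map_add, ← _root_.map_add, ← _root_.map_smul, ← _root_.map_sub, ← _root_.map_smul, ← _root_.map_add]
    congr 1
    rw [hA, hD, ← Matrix.fromBlocks_one, Matrix.fromBlocks_smul, Matrix.fromBlocks_smul]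
    simp only [Matrix.fromBlocks_add, sub_eq_add_neg, Matrix.fromBlocks_neg,
      Matrix.fromBlocks_add, Matrix.fromBlocks_inj, ← ha, ← hb, ← hc, ← hd]
    refine ⟨?_, ?_, ?_, ?_⟩ <;> module
  -- Step 2: invertibility of A
  have hmul1 : A * (a + a + x • 1) = (4 - x ^ 2) • 1 := by
    rw [hA]
    simp only [add_mul, mul_add, sub_mul, mul_sub, Matrix.smul_mul, Matrix.mul_smul,
      Matrix.one_mul, Matrix.mul_one, haa, smul_smul]
    match_scalars <;> ring
  have hmul2 : (a + a + x • 1) * A = (4 - x ^ 2) • 1 := by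
    rw [hA]
    simp only [add_mul, mul_add, sub_mul, mul_sub, Matrix.smul_mul, Matrix.mul_smul,
      Matrix.one_mul, Matrix.mul_one, haa, smul_smul]
    match_scalars <;> ring
  letI instInv : Invertible A :=
    ⟨(4 - x ^ 2)⁻¹ • (a + a + x • 1),
     by rw [Matrix.smul_mul, hmul2, smul_smul, inv_mul_cancel₀ h4, one_smul],
     by rw [Matrix.mul_smul, hmul1, smul_smul, inv_mul_cancel₀ h4, one_smul]⟩
  have hinv : ⅟A = (4 - x ^ 2)⁻¹ • (a + a + x • 1) := rfl
  -- Step 3: determinant of A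
  have hdetA : A.det = (x ^ 2 - 4) ^ 2 ^ k := by
    have h : A = Matrix.reindexAlgEquiv ℝ ℝ (finEquiv2 k)
        (Matrix.fromBlocks ((-x) • 1) ((2 : ℝ) • 1) ((2 : ℝ) • 1) ((-x) • 1)) := by
      have h1 : a = Matrix.reindexAlgEquiv ℝ ℝ (finEquiv2 k)
          (Matrix.fromBlocks 0 1 1 0) := by rw [ha, grigGen_succ k]
      rw [hA, h1, show (1 : Matrix (Fin (2 ^ (k + 1))) (Fin (2 ^ (k + 1))) ℝ) =
        Matrix.reindexAlgEquiv ℝ ℝ (finEquiv2 k) 1 from (_root_.map_one _).symm,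
        ← _root_.map_add, ← _root_.map_smul, ← _root_.map_sub]
      congr 1
      rw [← Matrix.fromBlocks_one, Matrix.fromBlocks_smul]
      simp only [Matrix.fromBlocks_add, sub_eq_add_neg, Matrix.fromBlocks_neg,
        Matrix.fromBlocks_add, Matrix.fromBlocks_inj]
      refine ⟨?_, ?_, ?_, ?_⟩ <;> module
    rw [h, Matrix.reindexAlgEquiv_apply, Matrix.det_reindex_self, det_swap_block]
  -- Step 4: the Schur complement is the next pencil
  have hschur : D - (y • 1) * ⅟A * (y • 1) =
      grigPencil (k + 1) (x - x * y ^ 2 / (x ^ 2 - 4)) (2 * y ^ 2 / (x ^ 2 - 4)) := by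
    rw [hinv, hD, grigPencil, ← ha, ← hb, ← hc, ← hd]
    simp only [Matrix.smul_mul, Matrix.mul_smul, Matrix.one_mul, Matrix.mul_one, smul_smul,
      smul_add]
    match_scalars <;> field_simp <;> ring
  -- Assemble
  rw [hpencil, Matrix.reindexAlgEquiv_apply, Matrix.det_reindex_self,
    Matrix.det_fromBlocks₁₁, hdetA, hschur]
end

section
/- Let f : ℝ → ℝ be the polynomial map f(x) = x² − x − 3, let F : ℝ² → ℝ² be F(x,y) = ( x + 2y²(−x² + x + y²)/((x − 1 − y)(x² − 1 + y − y²)), y²(x − 1 + y)/((x − 1 − y)(x² − 1 + y − y²)) ), and let ψ(x,y) = (x² − 1 − xy − 2y²)/y. Then for all real x, y with y ≠ 0, x − 1 − y ≠ 0, x − 1 + y ≠ 0, and x² − 1 + y − y² ≠ 0: ψ(F(x,y)) = f(ψ(x,y)); that is, ψ semi-conjugates the two-dimensional rational map F to the one-dimensional polynomial map f. -/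
/-- The map `ψ(x,y) = (x² − 1 − xy − 2y²)/y` semi-conjugates the two-dimensional rational map
`F(x,y) = (x + 2y²(−x² + x + y²)/((x − 1 − y)(x² − 1 + y − y²)),
           y²(x − 1 + y)/((x − 1 − y)(x² − 1 + y − y²)))`
to the one-dimensional polynomial map `f(x) = x² − x − 3`: for all real `x, y` with `y ≠ 0`,
`x − 1 − y ≠ 0`, `x − 1 + y ≠ 0` and `x² − 1 + y − y² ≠ 0`, `ψ(F(x,y)) = f(ψ(x,y))`. -/
theorem psi_semiconjugates_F_to_f_hanoi (x y : ℝ) (hy : y ≠ 0) (h1 : x - 1 - y ≠ 0)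
    (h2 : x - 1 + y ≠ 0) (h3 : x ^ 2 - 1 + y - y ^ 2 ≠ 0) :
    (let f : ℝ → ℝ := fun t => t ^ 2 - t - 3
     let F : ℝ × ℝ → ℝ × ℝ := fun p =>
       (p.1 + 2 * p.2 ^ 2 * (-p.1 ^ 2 + p.1 + p.2 ^ 2) /
           ((p.1 - 1 - p.2) * (p.1 ^ 2 - 1 + p.2 - p.2 ^ 2)),
        p.2 ^ 2 * (p.1 - 1 + p.2) / ((p.1 - 1 - p.2) * (p.1 ^ 2 - 1 + p.2 - p.2 ^ 2)))
     let ψ : ℝ × ℝ → ℝ := fun p => (p.1 ^ 2 - 1 - p.1 * p.2 - 2 * p.2 ^ 2) / p.2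
     ψ (F (x, y)) = f (ψ (x, y))) := by
  simp only
  field_simp
  ring
end
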